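/- arXiv:0712.2172 — 2 statements merged into one kernel-verified Lean document; each statement's English description precedes it below -/
import Mathlib

section
/- The space S(F,ψ) is mapped into itself by the Fourier transform f ↦ f̂, where f̂(x) = ∫^F f(y)ψ(xy) dy; and for every f ∈ S(F,ψ) and every x ∈ F the double transform formula f̂̂(x) = λ·f(−x) holds, where λ > 0 is the constant such that the double Fourier transform on k (with respect to ψ̄ and the chosen Haar measure) satisfies ĝ̂(u) = λ·g(−u) for all Schwartz–Bruhat functions g on k. -/
noncomputable section

open MeasureTheory

/-- A field `F` with a split valuation `ν : F^× → Γ` (split by `t`), with residue field `k`,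
residue map `ρ : O_F → k`, where `Γ` has a minimal positive element `one`. -/
structure LiftSetup (Γ F k : Type*) [AddCommGroup Γ] [LinearOrder Γ] [IsOrderedAddMonoid Γ] [Field F] [Field k] where
  /-- the valuation (recorded on nonzero elements) -/
  ν : F → Γ
  /-- the splitting homomorphism `t : Γ → F^×` -/
  t : Γ → F
  /-- the residue map (recorded on the valuation ring) -/
  ρ : F → k
  /-- the minimal positive element of `Γ` -/
  one : Γ
  one_pos : 0 < one
  one_min : ∀ γ : Γ, 0 < γ → one ≤ γ
  ν_mul : ∀ x y : F, x ≠ 0 → y ≠ 0 → ν (x * y) = ν x + ν y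
  ν_add : ∀ x y : F, x ≠ 0 → y ≠ 0 → x + y ≠ 0 → min (ν x) (ν y) ≤ ν (x + y)
  t_ne : ∀ γ : Γ, t γ ≠ 0
  t_add : ∀ γ δ : Γ, t (γ + δ) = t γ * t δ
  ν_t : ∀ γ : Γ, ν (t γ) = γ
  ρ_add : ∀ x y : F, (x = 0 ∨ 0 ≤ ν x) → (y = 0 ∨ 0 ≤ ν y) → ρ (x + y) = ρ x + ρ y
  ρ_mul : ∀ x y : F, (x = 0 ∨ 0 ≤ ν x) → (y = 0 ∨ 0 ≤ ν y) → ρ (x * y) = ρ x * ρ y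
  ρ_one : ρ 1 = 1
  ρ_surj : ∀ u : k, ∃ x : F, (x = 0 ∨ 0 ≤ ν x) ∧ ρ x = u
  ρ_eq_zero : ∀ x : F, (x = 0 ∨ 0 ≤ ν x) → (ρ x = 0 ↔ (x = 0 ∨ 0 < ν x))

namespace LiftSetup

variable {Γ F k : Type*} [AddCommGroup Γ] [LinearOrder Γ] [IsOrderedAddMonoid Γ] [Field F] [Field k]
variable (S : LiftSetup Γ F k)

/-- The ring of integers `O_F` of the valuation. -/
def integers : Set F := {x | x = 0 ∨ 0 ≤ S.ν x}

/-- The translated fractional ideal `a + t(γ)O_F`. -/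
def fracIdeal (a : F) (γ : Γ) : Set F := {x | (x - a) * S.t (-γ) ∈ S.integers}

/-- The lift `f^{a,γ}` of a function `f` on the residue field `k`:
`f^{a,γ}(x) = f(ρ((x-a)t(-γ)))` for `x ∈ a + t(γ)O_F` and `0` otherwise. -/
def lift {A : Type*} [Zero A] (f : k → A) (a : F) (γ : Γ) : F → A :=
  (S.fracIdeal a γ).indicator fun x => f (S.ρ ((x - a) * S.t (-γ)))

/-- The homomorphism `η : F^× → k^×`, `x ↦ ρ(x t(-ν x))`. -/
def η (x : F) : k := S.ρ (x * S.t (-S.ν x))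

end LiftSetup

section CGamma

variable (Γ : Type*) [AddCommGroup Γ] [LinearOrder Γ] [IsOrderedAddMonoid Γ]

instance : IsDomain (AddMonoidAlgebra ℂ Γ) := NoZeroDivisors.to_isDomain _

/-- `ℂ(Γ)`: the field of fractions of the complex group algebra of `Γ`. -/
abbrev CGamma : Type _ := FractionRing (AddMonoidAlgebra ℂ Γ)

/-- The canonical embedding `ℂ → ℂ(Γ)`. -/
def embC : ℂ →+* CGamma Γ :=
  (algebraMap (AddMonoidAlgebra ℂ Γ) (CGamma Γ)).comp AddMonoidAlgebra.singleZeroRingHom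

variable {Γ}

/-- The basis element `X^γ` of `ℂ(Γ)`. -/
def Xp (γ : Γ) : CGamma Γ :=
  algebraMap (AddMonoidAlgebra ℂ Γ) (CGamma Γ) (AddMonoidAlgebra.single γ 1)

end CGamma

section GoodChar

variable {Γ F k : Type*} [AddCommGroup Γ] [LinearOrder Γ] [IsOrderedAddMonoid Γ] [Field F] [Field k] [TopologicalSpace k]

/-- `ψ` is a nontrivial good character of `F` of conductor `𝔣`: a homomorphism from the
additive group of `F` to the complex unit circle, trivial on `t(𝔣)O_F`, nontrivial on
`t(𝔣-1)O_F`, whose induced map `ψ̄` on the residue field `k` (given by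
`ψ̄(ρ(x)) = ψ(t(𝔣-1)x)` for `x ∈ O_F`) is well defined and continuous. -/
def LiftSetup.IsGoodCharacter (S : LiftSetup Γ F k) (ψ : F → ℂ) (𝔣 : Γ) : Prop :=
  (∀ x y : F, ψ (x + y) = ψ x * ψ y) ∧
  (∀ x : F, ‖ψ x‖ = 1) ∧
  (∀ x ∈ S.integers, ψ (S.t 𝔣 * x) = 1) ∧
  (∃ x ∈ S.integers, ψ (S.t (𝔣 - S.one) * x) ≠ 1) ∧
  (∃ ψbar : k → ℂ, Continuous ψbar ∧
    ∀ x ∈ S.integers, ψbar (S.ρ x) = ψ (S.t (𝔣 - S.one) * x))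

end GoodChar

section LFmu

variable {Γ F k : Type*} [AddCommGroup Γ] [LinearOrder Γ] [IsOrderedAddMonoid Γ] [Field F] [Field k]
  [MeasurableSpace k]

open MeasureTheory

/-- `𝓛(F)`: the `ℂ(Γ)`-span of the lifts of Haar-integrable functions on `k`. -/
def LFmu (S : LiftSetup Γ F k) (μ : Measure k) : Submodule (CGamma Γ) (F → CGamma Γ) :=
  Submodule.span (CGamma Γ)
    {g | ∃ f : k → ℂ, Integrable f μ ∧ ∃ (a : F) (γ : Γ),
        g = S.lift (fun u => embC Γ (f u)) a γ}

theorem liftC_mem_mu (S : LiftSetup Γ F k) (μ : Measure k)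
    {f : k → ℂ} (hf : Integrable f μ) (a : F) (γ : Γ) :
    S.lift (fun u => embC Γ (f u)) a γ ∈ LFmu S μ :=
  Submodule.subset_span ⟨f, hf, a, γ, rfl⟩

/-- `𝓛^γ`: the complex span of the lifts of Haar-integrable functions at height `γ`. -/
def Lheight (S : LiftSetup Γ F k) (μ : Measure k) (γ : Γ) : Submodule ℂ (F → ℂ) :=
  Submodule.span ℂ {g | ∃ f : k → ℂ, Integrable f μ ∧ ∃ a : F, g = S.lift f a γ}

end LFmu

section LFpsi

variable {Γ F k : Type*} [AddCommGroup Γ] [LinearOrder Γ] [IsOrderedAddMonoid Γ] [Field F] [Field k]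
  [MeasurableSpace k]

open MeasureTheory

/-- `𝓛(F,ψ)`: the `ℂ(Γ)`-span of the functions `f·ψ_a` for `f ∈ 𝓛(F)`, `a ∈ F`. -/
def LFpsi (S : LiftSetup Γ F k) (μ : Measure k) (ψ : F → ℂ) :
    Submodule (CGamma Γ) (F → CGamma Γ) :=
  Submodule.span (CGamma Γ)
    {g | ∃ f ∈ LFmu S μ, ∃ a : F, g = fun x => embC Γ (ψ (a * x)) * f x}

end LFpsi

open scoped Classical in
/-- The Fourier transform on `F`: `f̂(x) = ∫^F f(y)ψ(xy) dy`, computed via the extended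
integral `Jext` on `𝓛(F,ψ)` (and defined to be `0` where the integrand is not integrable). -/
noncomputable def fourierF {Γ F k : Type*} [AddCommGroup Γ] [LinearOrder Γ] [IsOrderedAddMonoid Γ] [Field F] [Field k]
    [MeasurableSpace k] (S : LiftSetup Γ F k) (μ : MeasureTheory.Measure k) (ψ : F → ℂ)
    (Jext : LFpsi S μ ψ →ₗ[CGamma Γ] CGamma Γ) (f : F → CGamma Γ) : F → CGamma Γ :=
  fun x =>
    if hm : (fun y => f y * embC Γ (ψ (x * y))) ∈ LFpsi S μ ψ then Jext ⟨_, hm⟩ else 0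

/-- `S(F,ψ)`: the `ℂ(Γ)`-span of the functions `g^{a,γ}·ψ_b` for `g` in the Schwartz–Bruhat
space of `k`, `a, b ∈ F`, `γ ∈ Γ`. -/
def SFpsi {Γ F k : Type*} [AddCommGroup Γ] [LinearOrder Γ] [IsOrderedAddMonoid Γ] [Field F] [Field k]
    [MeasurableSpace k] (S : LiftSetup Γ F k) (μ : MeasureTheory.Measure k) (ψ : F → ℂ)
    (SchwartzBruhat : Set (k → ℂ)) : Submodule (CGamma Γ) (F → CGamma Γ) :=
  Submodule.span (CGamma Γ)
    {h | ∃ g ∈ SchwartzBruhat, ∃ (a b : F) (γ : Γ),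
      h = fun x => embC Γ (ψ (b * x)) * S.lift (fun u => embC Γ (g u)) a γ x}

section AuxBasic

variable {Γ F k : Type*} [AddCommGroup Γ] [LinearOrder Γ] [IsOrderedAddMonoid Γ] [Field F] [Field k]
variable (S : LiftSetup Γ F k)

theorem LiftSetup.ν_one' : S.ν 1 = 0 := by
  have := S.ν_mul 1 1 one_ne_zero one_ne_zero
  rw [mul_one] at this
  exact (left_eq_add.mp this)

theorem LiftSetup.t_zero : S.t 0 = 1 := by
  have := S.t_add 0 0
  rw [add_zero] at this
  have h := S.t_ne 0
  have : S.t 0 * S.t 0 = S.t 0 * 1 := by rw [mul_one]; exact this.symm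
  exact mul_left_cancel₀ h this

theorem LiftSetup.ν_neg_one : S.ν (-1 : F) = 0 := by
  have := S.ν_mul (-1) (-1) (by norm_num) (by norm_num)
  rw [neg_mul_neg, one_mul, S.ν_one'] at this
  rcases lt_trichotomy (S.ν (-1 : F)) 0 with h | h | h
  · exact absurd this.symm (ne_of_lt (add_neg h h))
  · exact h
  · exact absurd this.symm (ne_of_gt (add_pos h h))

theorem LiftSetup.ν_neg (x : F) (hx : x ≠ 0) : S.ν (-x) = S.ν x := by
  have := S.ν_mul (-1) x (by norm_num) hx
  rw [neg_one_mul, S.ν_neg_one, zero_add] at this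
  exact this

theorem LiftSetup.ν_inv (x : F) (hx : x ≠ 0) : S.ν x⁻¹ = -S.ν x := by
  have := S.ν_mul x x⁻¹ hx (inv_ne_zero hx)
  rw [mul_inv_cancel₀ hx, S.ν_one'] at this
  exact eq_neg_of_add_eq_zero_right this.symm

theorem LiftSetup.zero_mem_integers : (0 : F) ∈ S.integers := Or.inl rfl

theorem LiftSetup.t_mem_integers {γ : Γ} (hγ : 0 ≤ γ) : S.t γ ∈ S.integers :=
  Or.inr (by rw [S.ν_t]; exact hγ)

theorem LiftSetup.neg_mem_integers {x : F} (hx : x ∈ S.integers) : -x ∈ S.integers := by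
  rcases hx with h | h
  · exact Or.inl (by rw [h, neg_zero])
  · rcases eq_or_ne x 0 with h0 | h0
    · exact Or.inl (by rw [h0, neg_zero])
    · exact Or.inr (by rw [S.ν_neg x h0]; exact h)

theorem LiftSetup.mul_mem_integers {x y : F} (hx : x ∈ S.integers) (hy : y ∈ S.integers) :
    x * y ∈ S.integers := by
  rcases eq_or_ne x 0 with h0 | h0
  · exact Or.inl (by rw [h0, zero_mul])
  rcases eq_or_ne y 0 with h1 | h1
  · exact Or.inl (by rw [h1, mul_zero])
  rcases hx with h | h
  · exact absurd h h0
  rcases hy with h' | h'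
  · exact absurd h' h1
  · exact Or.inr (by rw [S.ν_mul x y h0 h1]; exact add_nonneg h h')

theorem LiftSetup.add_mem_integers {x y : F} (hx : x ∈ S.integers) (hy : y ∈ S.integers) :
    x + y ∈ S.integers := by
  rcases eq_or_ne x 0 with h0 | h0
  · rw [h0, zero_add]; exact hy
  rcases eq_or_ne y 0 with h1 | h1
  · rw [h1, add_zero]; exact hx
  rcases eq_or_ne (x + y) 0 with h2 | h2
  · exact Or.inl h2
  rcases hx with h | h
  · exact absurd h h0
  rcases hy with h' | h'
  · exact absurd h' h1
  · exact Or.inr (le_trans (le_min h h') (S.ν_add x y h0 h1 h2))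

theorem LiftSetup.ρ_zero : S.ρ (0 : F) = 0 :=
  (S.ρ_eq_zero 0 (Or.inl rfl)).mpr (Or.inl rfl)

theorem LiftSetup.ρ_neg {x : F} (hx : x ∈ S.integers) : S.ρ (-x) = - S.ρ x := by
  have h := S.ρ_add x (-x) hx (S.neg_mem_integers hx)
  rw [add_neg_cancel, S.ρ_zero] at h
  exact eq_neg_of_add_eq_zero_right h.symm

end AuxBasic

section AuxLift

variable {Γ F k : Type*} [AddCommGroup Γ] [LinearOrder Γ] [IsOrderedAddMonoid Γ] [Field F] [Field k]
variable (S : LiftSetup Γ F k)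

theorem LiftSetup.lift_of_mem {A : Type*} [Zero A] (f : k → A) {a : F} {γ : Γ} {x : F}
    (h : (x - a) * S.t (-γ) ∈ S.integers) :
    S.lift f a γ x = f (S.ρ ((x - a) * S.t (-γ))) :=
  Set.indicator_of_mem (show x ∈ S.fracIdeal a γ from h) _

theorem LiftSetup.lift_of_not_mem {A : Type*} [Zero A] (f : k → A) {a : F} {γ : Γ} {x : F}
    (h : ¬ ((x - a) * S.t (-γ) ∈ S.integers)) :
    S.lift f a γ x = 0 :=
  Set.indicator_of_notMem (show ¬ (x ∈ S.fracIdeal a γ) from h) _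

theorem LiftSetup.lift_translate {A : Type*} [Zero A] (f : k → A) (a : F) (γ : Γ) (y : F) :
    S.lift f a γ (y + a) = S.lift f 0 γ y := by
  by_cases h : y * S.t (-γ) ∈ S.integers
  · rw [S.lift_of_mem f (by rwa [add_sub_cancel_right]), S.lift_of_mem f (by rwa [sub_zero]),
      add_sub_cancel_right, sub_zero]
  · rw [S.lift_of_not_mem f (by rwa [add_sub_cancel_right]),
      S.lift_of_not_mem f (by rwa [sub_zero])]

theorem LiftSetup.t_neg_mul_t (γ : Γ) : S.t (-γ) * S.t γ = 1 := by
  rw [← S.t_add, neg_add_cancel, S.t_zero]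

end AuxLift

section AuxCG

variable {Γ : Type*} [AddCommGroup Γ] [LinearOrder Γ] [IsOrderedAddMonoid Γ]

theorem Xp_add (γ δ : Γ) : Xp (γ + δ) = Xp γ * Xp δ := by
  unfold Xp
  rw [← map_mul]
  congr 1
  rw [AddMonoidAlgebra.single_mul_single, one_mul]

theorem Xp_zero : Xp (0 : Γ) = 1 := by
  unfold Xp
  rw [← AddMonoidAlgebra.one_def, map_one]

theorem embC_injective : Function.Injective (embC Γ) :=
  (embC Γ).injective

end AuxCG

section AuxKey

open MeasureTheory

variable {Γ F k : Type*} [AddCommGroup Γ] [LinearOrder Γ] [IsOrderedAddMonoid Γ] [Field F] [Field k]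
  [TopologicalSpace k] [IsTopologicalRing k]
  [MeasurableSpace k] [BorelSpace k]
variable (μ : Measure k) (S : LiftSetup Γ F k) (ψ : F → ℂ)

theorem psiMul_lift_mem_LFpsi (c a : F) (γ : Γ) {g : k → ℂ} (hg : Integrable g μ) :
    (fun y => embC Γ (ψ (c * y)) * S.lift (fun u => embC Γ (g u)) a γ y) ∈ LFpsi S μ ψ :=
  Submodule.subset_span ⟨S.lift (fun u => embC Γ (g u)) a γ, liftC_mem_mu S μ hg a γ, c, rfl⟩

theorem integrand_eq (hψadd : ∀ x y : F, ψ (x + y) = ψ x * ψ y)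
    {g : k → ℂ} (a b : F) (γ : Γ) (x : F) :
    (fun y => (embC Γ (ψ (b * y)) * S.lift (fun u => embC Γ (g u)) a γ y) *
        embC Γ (ψ (x * y)))
      = fun y => embC Γ (ψ ((x + b) * y)) * S.lift (fun u => embC Γ (g u)) a γ y := by
  funext y
  have h1 : ψ (b * y) * ψ (x * y) = ψ ((x + b) * y) := by
    rw [← hψadd]; exact congrArg ψ (by ring)
  rw [mul_right_comm, ← map_mul, h1]

theorem integrand_mem (hψadd : ∀ x y : F, ψ (x + y) = ψ x * ψ y)
    {g : k → ℂ} (hg : Integrable g μ) (a b : F) (γ : Γ) (x : F) :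
    (fun y => (embC Γ (ψ (b * y)) * S.lift (fun u => embC Γ (g u)) a γ y) *
        embC Γ (ψ (x * y))) ∈ LFpsi S μ ψ := by
  rw [integrand_eq S ψ hψadd a b γ x]
  exact psiMul_lift_mem_LFpsi μ S ψ (x + b) a γ hg

end AuxKey

section AuxKey2

open MeasureTheory

variable {Γ F k : Type*} [AddCommGroup Γ] [LinearOrder Γ] [IsOrderedAddMonoid Γ] [Field F] [Field k]
  [TopologicalSpace k] [IsTopologicalRing k]
  [MeasurableSpace k] [BorelSpace k]

theorem psibar_bound (S : LiftSetup Γ F k) (ψ : F → ℂ)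
    (hψabs : ∀ x : F, ‖ψ x‖ = 1)
    (ψbar : k → ℂ) (hψbar : ∀ x ∈ S.integers, ψbar (S.ρ x) = ψ x) (u : k) :
    ‖ψbar u‖ ≤ 1 := by
  obtain ⟨x, hxO, hx⟩ := S.ρ_surj u
  rw [← hx, hψbar x hxO, hψabs]

theorem ghat_integrable (S : LiftSetup Γ F k) (μ : Measure k) (ψ : F → ℂ)
    (hψabs : ∀ x : F, ‖ψ x‖ = 1)
    (ψbar : k → ℂ) (hψbar_cont : Continuous ψbar)
    (hψbar : ∀ x ∈ S.integers, ψbar (S.ρ x) = ψ x)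
    {g : k → ℂ} (hg : Integrable g μ) (v : k) :
    Integrable (fun u => g u * ψbar (u * v)) μ := by
  have h : (fun u => g u * ψbar (u * v)) = fun u => ψbar (u * v) * g u :=
    funext fun u => mul_comm _ _
  rw [h]
  exact hg.bdd_mul
    ((hψbar_cont.comp (continuous_id.mul continuous_const)).aestronglyMeasurable)
    (c := 1) (Filter.Eventually.of_forall fun u => psibar_bound S ψ hψabs ψbar hψbar _)

set_option maxHeartbeats 1000000 in
theorem key_fourier (S : LiftSetup Γ F k) (μ : Measure k) (ψ : F → ℂ)
    (hψadd : ∀ x y : F, ψ (x + y) = ψ x * ψ y)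
    (hψabs : ∀ x : F, ‖ψ x‖ = 1)
    (hψnt : ∃ x₀ ∈ S.integers, ψ x₀ ≠ 1)
    (ψbar : k → ℂ) (hψbar_cont : Continuous ψbar)
    (hψbar : ∀ x ∈ S.integers, ψbar (S.ρ x) = ψ x)
    (Jext : LFpsi S μ ψ →ₗ[CGamma Γ] CGamma Γ)
    (hJext : ∀ (f : k → ℂ) (hf : Integrable f μ) (a : F) (γ : Γ)
      (hmem : S.lift (fun u => embC Γ (f u)) a γ ∈ LFpsi S μ ψ),
      Jext ⟨S.lift (fun u => embC Γ (f u)) a γ, hmem⟩ = embC Γ (∫ u, f u ∂μ) * Xp γ)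
    (hJinv : ∀ (g : F → CGamma Γ) (hg : g ∈ LFpsi S μ ψ) (τ : F)
      (hg' : (fun x => g (x + τ)) ∈ LFpsi S μ ψ),
      Jext ⟨fun x => g (x + τ), hg'⟩ = Jext ⟨g, hg⟩)
    {g : k → ℂ} (hg : Integrable g μ) (a b : F) (γ : Γ) :
    fourierF S μ ψ Jext
        (fun y => embC Γ (ψ (b * y)) * S.lift (fun u => embC Γ (g u)) a γ y)
      = fun x => (embC Γ (ψ (b * a)) * Xp γ) *
          (embC Γ (ψ (a * x)) *
            S.lift (fun u => embC Γ (∫ u', g u' * ψbar (u' * u) ∂μ)) (-b) (-γ) x) := by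
  have hψ0 : ψ 0 = 1 := by
    have h := hψadd 0 0
    rw [add_zero] at h
    have hne : ψ 0 ≠ 0 := fun h0 => by simpa [h0] using hψabs 0
    have h2 : ψ 0 * 1 = ψ 0 * ψ 0 := by rw [mul_one]; exact h
    exact (mul_left_cancel₀ hne h2).symm
  funext x
  set c : F := x + b with hc
  set ghat : k → ℂ := fun v => ∫ u', g u' * ψbar (u' * v) ∂μ with hghat
  set L0 : F → CGamma Γ := fun y => embC Γ (ψ (c * y)) * S.lift (fun u => embC Γ (g u)) 0 γ y
    with hL0
  have hL0mem : L0 ∈ LFpsi S μ ψ := psiMul_lift_mem_LFpsi μ S ψ c 0 γ hg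
  have hJ0 : Jext ⟨L0, hL0mem⟩ = S.lift (fun u => embC Γ (ghat u)) (-b) (-γ) x * Xp γ := by
    by_cases hO : c * S.t γ ∈ S.integers
    · -- case A : the integrand is itself a lift
      set v : k := S.ρ (c * S.t γ) with hv
      have hfun : L0 = S.lift (fun u => embC Γ (g u * ψbar (u * v))) 0 γ := by
        funext y
        simp only [hL0]
        by_cases hy : (y - 0) * S.t (-γ) ∈ S.integers
        · rw [S.lift_of_mem _ hy, S.lift_of_mem _ hy]
          have hprod : (y - 0) * S.t (-γ) * (c * S.t γ) ∈ S.integers := S.mul_mem_integers hy hO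
          have harg : (y - 0) * S.t (-γ) * (c * S.t γ) = c * y := by
            rw [sub_zero]
            calc y * S.t (-γ) * (c * S.t γ) = c * y * (S.t (-γ) * S.t γ) := by ring
            _ = c * y := by rw [S.t_neg_mul_t, mul_one]
          have hψc : ψ (c * y) = ψbar (S.ρ ((y - 0) * S.t (-γ)) * v) := by
            rw [hv, ← S.ρ_mul _ _ hy hO, hψbar _ hprod, harg]
          rw [hψc, ← map_mul]
          exact congrArg _ (mul_comm _ _)
        · rw [S.lift_of_not_mem _ hy, S.lift_of_not_mem _ hy, mul_zero]
      have hint2 : Integrable (fun u => g u * ψbar (u * v)) μ :=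
        ghat_integrable S μ ψ hψabs ψbar hψbar_cont hψbar hg v
      have hmemL : S.lift (fun u => embC Γ (g u * ψbar (u * v))) 0 γ ∈ LFpsi S μ ψ :=
        hfun ▸ hL0mem
      have hxO : (x - -b) * S.t (-(-γ)) ∈ S.integers := by
        rw [sub_neg_eq_add, neg_neg, ← hc]; exact hO
      calc Jext ⟨L0, hL0mem⟩
          = Jext ⟨S.lift (fun u => embC Γ (g u * ψbar (u * v))) 0 γ, hmemL⟩ :=
            congrArg Jext (Subtype.ext hfun)
        _ = embC Γ (∫ u, g u * ψbar (u * v) ∂μ) * Xp γ :=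
            hJext (fun u => g u * ψbar (u * v)) hint2 0 γ hmemL
        _ = S.lift (fun u => embC Γ (ghat u)) (-b) (-γ) x * Xp γ := by
            rw [S.lift_of_mem _ hxO]
            have harg2 : (x - -b) * S.t (-(-γ)) = c * S.t γ := by
              rw [sub_neg_eq_add, neg_neg, ← hc]
            rw [harg2, hghat, ← hv]
    · -- case B : the integral vanishes
      have hc0 : c ≠ 0 := by
        intro h0; exact hO (by rw [h0, zero_mul]; exact S.zero_mem_integers)
      have hδ : S.ν c + γ < 0 := by
        by_contra hge
        exact hO (Or.inr (by
          rw [S.ν_mul c _ hc0 (S.t_ne γ), S.ν_t]; exact not_lt.mp hge))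
      obtain ⟨x₀, hx₀O, hx₀ψ⟩ := hψnt
      have hx₀0 : x₀ ≠ 0 := by rintro rfl; exact hx₀ψ hψ0
      have hνx₀ : 0 ≤ S.ν x₀ :=
        Or.resolve_left (show x₀ = 0 ∨ 0 ≤ S.ν x₀ from hx₀O) hx₀0
      set τ : F := c⁻¹ * x₀ with hτ
      have hτ0 : τ ≠ 0 := mul_ne_zero (inv_ne_zero hc0) hx₀0
      have hντ : 0 < S.ν (τ * S.t (-γ)) := by
        have h1 : S.ν (τ * S.t (-γ)) = S.ν x₀ + -(S.ν c + γ) := by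
          rw [S.ν_mul _ _ hτ0 (S.t_ne _), hτ, S.ν_mul _ _ (inv_ne_zero hc0) hx₀0,
            S.ν_inv _ hc0, S.ν_t]
          abel
        rw [h1]
        exact add_pos_of_nonneg_of_pos hνx₀ (neg_pos.mpr hδ)
      have hτmem : τ * S.t (-γ) ∈ S.integers := Or.inr (le_of_lt hντ)
      have hliftτ : ∀ y : F, S.lift (fun u => embC Γ (g u)) 0 γ (y + τ)
          = S.lift (fun u => embC Γ (g u)) 0 γ y := by
        intro y
        have hadd : (y + τ - 0) * S.t (-γ) = (y - 0) * S.t (-γ) + τ * S.t (-γ) := by ring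
        by_cases hy : (y - 0) * S.t (-γ) ∈ S.integers
        · have hmem2 : (y + τ - 0) * S.t (-γ) ∈ S.integers := by
            rw [hadd]; exact S.add_mem_integers hy hτmem
          rw [S.lift_of_mem _ hmem2, S.lift_of_mem _ hy]
          congr 2
          rw [hadd, S.ρ_add _ _ hy hτmem,
            (S.ρ_eq_zero _ hτmem).mpr (Or.inr hντ), add_zero]
        · have hmem2 : ¬ ((y + τ - 0) * S.t (-γ) ∈ S.integers) := by
            intro hmem2
            apply hy
            have hsplit : (y - 0) * S.t (-γ)
                = (y + τ - 0) * S.t (-γ) + -(τ * S.t (-γ)) := by ring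
            rw [hsplit]
            exact S.add_mem_integers hmem2 (S.neg_mem_integers hτmem)
          rw [S.lift_of_not_mem _ hmem2, S.lift_of_not_mem _ hy]
      have htrτ : (fun y => L0 (y + τ)) = embC Γ (ψ (c * τ)) • L0 := by
        funext y
        simp only [hL0, Pi.smul_apply, smul_eq_mul]
        rw [hliftτ y]
        have h3 : ψ (c * (y + τ)) = ψ (c * τ) * ψ (c * y) := by
          rw [← hψadd]; exact congrArg ψ (by ring)
        rw [h3, map_mul]; ring
      have hmemτ : (fun y => L0 (y + τ)) ∈ LFpsi S μ ψ := by
        rw [htrτ]; exact Submodule.smul_mem _ _ hL0mem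
      have heq1 : Jext ⟨fun y => L0 (y + τ), hmemτ⟩ = Jext ⟨L0, hL0mem⟩ :=
        hJinv L0 hL0mem τ hmemτ
      have heq2 : Jext ⟨fun y => L0 (y + τ), hmemτ⟩
          = embC Γ (ψ (c * τ)) * Jext ⟨L0, hL0mem⟩ := by
        have h4 : (⟨fun y => L0 (y + τ), hmemτ⟩ : LFpsi S μ ψ)
            = embC Γ (ψ (c * τ)) • ⟨L0, hL0mem⟩ := Subtype.ext htrτ
        rw [h4, LinearMap.map_smul, smul_eq_mul]
      have hz : Jext ⟨L0, hL0mem⟩ - embC Γ (ψ (c * τ)) * Jext ⟨L0, hL0mem⟩ = 0 := by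
        rw [← heq2, heq1, sub_self]
      have hqne : embC Γ (ψ (c * τ)) ≠ 1 := by
        have hψcτ : ψ (c * τ) = ψ x₀ := by
          rw [hτ, ← mul_assoc, mul_inv_cancel₀ hc0, one_mul]
        rw [hψcτ]
        intro h1
        exact hx₀ψ (embC_injective (by rw [h1, map_one]))
      have hz' : (1 - embC Γ (ψ (c * τ))) * Jext ⟨L0, hL0mem⟩ = 0 := by
        rw [sub_mul, one_mul]; exact hz
      have hJ0z : Jext ⟨L0, hL0mem⟩ = 0 :=
        (mul_eq_zero.mp hz').resolve_left (sub_ne_zero_of_ne (Ne.symm hqne))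
      rw [hJ0z]
      have hnm : ¬ ((x - -b) * S.t (-(-γ)) ∈ S.integers) := by
        rw [sub_neg_eq_add, neg_neg, ← hc]; exact hO
      rw [S.lift_of_not_mem _ hnm, zero_mul]
  -- now the outer computation
  have hm : (fun y => (fun y => embC Γ (ψ (b * y)) * S.lift (fun u => embC Γ (g u)) a γ y) y *
      embC Γ (ψ (x * y))) ∈ LFpsi S μ ψ := integrand_mem μ S ψ hψadd hg a b γ x
  rw [fourierF, dif_pos hm]
  set Lc : F → CGamma Γ := fun y => embC Γ (ψ (c * y)) * S.lift (fun u => embC Γ (g u)) a γ y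
    with hLc
  have hLcmem : Lc ∈ LFpsi S μ ψ := psiMul_lift_mem_LFpsi μ S ψ c a γ hg
  have hfun0 : (fun y => (embC Γ (ψ (b * y)) * S.lift (fun u => embC Γ (g u)) a γ y) *
      embC Γ (ψ (x * y))) = Lc := by
    rw [integrand_eq S ψ hψadd a b γ x, hLc, ← hc]
  have e0 : Jext ⟨_, hm⟩ = Jext ⟨Lc, hLcmem⟩ := congrArg Jext (Subtype.ext hfun0)
  have htra : (fun y => Lc (y + a)) = embC Γ (ψ (c * a)) • L0 := by
    funext y
    simp only [hLc, hL0, Pi.smul_apply, smul_eq_mul]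
    rw [S.lift_translate]
    have h5 : ψ (c * (y + a)) = ψ (c * a) * ψ (c * y) := by
      rw [← hψadd]; exact congrArg ψ (by ring)
    rw [h5, map_mul]; ring
  have hmema : (fun y => Lc (y + a)) ∈ LFpsi S μ ψ := by
    rw [htra]; exact Submodule.smul_mem _ _ hL0mem
  have e1 : Jext ⟨Lc, hLcmem⟩ = embC Γ (ψ (c * a)) * Jext ⟨L0, hL0mem⟩ := by
    rw [← hJinv Lc hLcmem a hmema]
    have h6 : (⟨fun y => Lc (y + a), hmema⟩ : LFpsi S μ ψ)
        = embC Γ (ψ (c * a)) • ⟨L0, hL0mem⟩ := Subtype.ext htra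
    rw [h6, LinearMap.map_smul, smul_eq_mul]
  rw [e0, e1, hJ0]
  have h7 : ψ (c * a) = ψ (b * a) * ψ (a * x) := by
    rw [← hψadd]; exact congrArg ψ (by rw [hc]; ring)
  rw [h7, map_mul, hghat]
  ring
end AuxKey2

section AuxLin

open MeasureTheory

variable {Γ F k : Type*} [AddCommGroup Γ] [LinearOrder Γ] [IsOrderedAddMonoid Γ] [Field F] [Field k]
  [MeasurableSpace k]

theorem lift_flip (S : LiftSetup Γ F k) (lam : ℂ) (g : k → ℂ) (a : F) (γ : Γ) (x : F) :
    S.lift (fun u => embC Γ (lam * g (-u))) (-a) γ x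
      = embC Γ lam * S.lift (fun u => embC Γ (g u)) a γ (-x) := by
  by_cases h : (x - -a) * S.t (-γ) ∈ S.integers
  · have h' : (-x - a) * S.t (-γ) ∈ S.integers := by
      rw [show (-x - a) * S.t (-γ) = -((x - -a) * S.t (-γ)) by ring]
      exact S.neg_mem_integers h
    rw [S.lift_of_mem _ h, S.lift_of_mem _ h', map_mul]
    have hρ : S.ρ ((-x - a) * S.t (-γ)) = - S.ρ ((x - -a) * S.t (-γ)) := by
      rw [show (-x - a) * S.t (-γ) = -((x - -a) * S.t (-γ)) by ring, S.ρ_neg h]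
    rw [hρ]
  · have h' : ¬ ((-x - a) * S.t (-γ) ∈ S.integers) := by
      intro h2
      apply h
      rw [show (x - -a) * S.t (-γ) = -((-x - a) * S.t (-γ)) by ring]
      exact S.neg_mem_integers h2
    rw [S.lift_of_not_mem _ h, S.lift_of_not_mem _ h', mul_zero]

variable (S : LiftSetup Γ F k) (μ : Measure k) (ψ : F → ℂ)
  (Jext : LFpsi S μ ψ →ₗ[CGamma Γ] CGamma Γ)

theorem integrand_add (f g : F → CGamma Γ) (x : F) :
    (fun y => (f + g) y * embC Γ (ψ (x * y)))
      = (fun y => f y * embC Γ (ψ (x * y))) + (fun y => g y * embC Γ (ψ (x * y))) := by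
  funext y; simp [add_mul]

theorem integrand_smul (c : CGamma Γ) (f : F → CGamma Γ) (x : F) :
    (fun y => (c • f) y * embC Γ (ψ (x * y)))
      = c • (fun y => f y * embC Γ (ψ (x * y))) := by
  funext y; simp [mul_assoc]

theorem fourierF_add {f g : F → CGamma Γ}
    (hf : ∀ x, (fun y => f y * embC Γ (ψ (x * y))) ∈ LFpsi S μ ψ)
    (hg : ∀ x, (fun y => g y * embC Γ (ψ (x * y))) ∈ LFpsi S μ ψ) :
    fourierF S μ ψ Jext (f + g) = fourierF S μ ψ Jext f + fourierF S μ ψ Jext g := by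
  funext x
  have hfg : (fun y => (f + g) y * embC Γ (ψ (x * y))) ∈ LFpsi S μ ψ := by
    rw [integrand_add]
    exact Submodule.add_mem _ (hf x) (hg x)
  simp only [fourierF, Pi.add_apply]
  rw [dif_pos (show (fun y => (f y + g y) * embC Γ (ψ (x * y))) ∈ LFpsi S μ ψ from hfg),
    dif_pos (hf x), dif_pos (hg x), ← map_add]
  apply congrArg Jext
  apply Subtype.ext
  show (fun y => (f y + g y) * embC Γ (ψ (x * y))) = _
  funext y
  simp [add_mul]

theorem fourierF_smul (c : CGamma Γ) {f : F → CGamma Γ}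
    (hf : ∀ x, (fun y => f y * embC Γ (ψ (x * y))) ∈ LFpsi S μ ψ) :
    fourierF S μ ψ Jext (c • f) = c • fourierF S μ ψ Jext f := by
  funext x
  have hcf : (fun y => (c • f) y * embC Γ (ψ (x * y))) ∈ LFpsi S μ ψ := by
    rw [integrand_smul]
    exact Submodule.smul_mem _ _ (hf x)
  simp only [fourierF, Pi.smul_apply]
  rw [dif_pos (show (fun y => c • f y * embC Γ (ψ (x * y))) ∈ LFpsi S μ ψ from hcf),
    dif_pos (hf x), ← LinearMap.map_smul]
  apply congrArg Jext
  apply Subtype.ext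
  show (fun y => c • f y * embC Γ (ψ (x * y))) = _
  funext y
  simp [smul_eq_mul, mul_assoc]

theorem fourierF_zero : fourierF S μ ψ Jext (0 : F → CGamma Γ) = 0 := by
  funext x
  have h0 : (fun y => (0 : F → CGamma Γ) y * embC Γ (ψ (x * y))) = 0 := by
    funext y; simp
  have hm : (fun y => (0 : F → CGamma Γ) y * embC Γ (ψ (x * y))) ∈ LFpsi S μ ψ := by
    rw [h0]; exact Submodule.zero_mem _
  simp only [fourierF]
  rw [dif_pos hm]
  have : (⟨_, hm⟩ : LFpsi S μ ψ) = 0 := Subtype.ext h0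
  rw [this, map_zero]
  rfl

theorem integrand_zero_mem : ∀ x, (fun y => (0 : F → CGamma Γ) y * embC Γ (ψ (x * y)))
    ∈ LFpsi S μ ψ := by
  intro x
  have h0 : (fun y => (0 : F → CGamma Γ) y * embC Γ (ψ (x * y))) = 0 := by
    funext y; simp
  rw [h0]; exact Submodule.zero_mem _

end AuxLin

open MeasureTheory in
/-- The space `S(F,ψ)` is invariant under the Fourier transform, and for
`f ∈ S(F,ψ)` the double transform formula `f̂̂(x) = λ·f(-x)` holds, where `λ > 0` is the
double Fourier transform constant of the Schwartz–Bruhat space of `k` (with respect to the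
induced character `ψ̄` and the chosen Haar measure). -/

theorem statement7
    {Γ F k : Type*} [AddCommGroup Γ] [LinearOrder Γ] [IsOrderedAddMonoid Γ] [Field F] [Field k]
    [TopologicalSpace k] [IsTopologicalRing k] [LocallyCompactSpace k]
    [MeasurableSpace k] [BorelSpace k]
    (hk_nondiscrete : ¬ IsOpen ({0} : Set k))
    (μ : Measure k) [μ.IsAddHaarMeasure]
    (S : LiftSetup Γ F k)
    (ψ : F → ℂ) (hψ : S.IsGoodCharacter ψ S.one)
    (ψbar : k → ℂ) (hψbar_cont : Continuous ψbar)
    (hψbar : ∀ x ∈ S.integers, ψbar (S.ρ x) = ψ x)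
    -- the Schwartz–Bruhat space of `k` and its basic properties:
    (SchwartzBruhat : Set (k → ℂ))
    (hSB_int : ∀ g ∈ SchwartzBruhat, Integrable g μ)
    (hSB_fourier : ∀ g ∈ SchwartzBruhat,
      (fun v => ∫ u, g u * ψbar (u * v) ∂μ) ∈ SchwartzBruhat)
    (lam : ℝ) (hlam : 0 < lam)
    (hSB_inv : ∀ g ∈ SchwartzBruhat, ∀ u : k,
      (∫ u', (∫ u'', g u'' * ψbar (u'' * u') ∂μ) * ψbar (u' * u) ∂μ) = lam * g (-u))
    -- the translation-invariant extension of `∫^F` to `𝓛(F,ψ)`: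
    (Jext : LFpsi S μ ψ →ₗ[CGamma Γ] CGamma Γ)
    (hJext : ∀ (f : k → ℂ) (hf : Integrable f μ) (a : F) (γ : Γ)
      (hmem : S.lift (fun u => embC Γ (f u)) a γ ∈ LFpsi S μ ψ),
      Jext ⟨S.lift (fun u => embC Γ (f u)) a γ, hmem⟩ = embC Γ (∫ u, f u ∂μ) * Xp γ)
    (hJinv : ∀ (g : F → CGamma Γ) (hg : g ∈ LFpsi S μ ψ) (τ : F)
      (hg' : (fun x => g (x + τ)) ∈ LFpsi S μ ψ),
      Jext ⟨fun x => g (x + τ), hg'⟩ = Jext ⟨g, hg⟩) :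
    (∀ f ∈ SFpsi S μ ψ SchwartzBruhat,
      fourierF S μ ψ Jext f ∈ SFpsi S μ ψ SchwartzBruhat) ∧
    (∀ f ∈ SFpsi S μ ψ SchwartzBruhat, ∀ x : F,
      fourierF S μ ψ Jext (fourierF S μ ψ Jext f) x = embC Γ (lam : ℂ) * f (-x)) := by
  obtain ⟨hψadd, hψabs, -, hnt0, -⟩ := hψ
  have hψnt : ∃ x₀ ∈ S.integers, ψ x₀ ≠ 1 := by
    obtain ⟨x₀, hx₀O, hx₀⟩ := hnt0
    exact ⟨x₀, hx₀O, by rwa [sub_self, S.t_zero, one_mul] at hx₀⟩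
  have hψ0 : ψ 0 = 1 := by
    have h := hψadd 0 0
    rw [add_zero] at h
    have hne : ψ 0 ≠ 0 := fun h0 => by simpa [h0] using hψabs 0
    have h2 : ψ 0 * 1 = ψ 0 * ψ 0 := by rw [mul_one]; exact h
    exact (mul_left_cancel₀ hne h2).symm
  have main : ∀ f ∈ SFpsi S μ ψ SchwartzBruhat,
      (∀ x, (fun y => f y * embC Γ (ψ (x * y))) ∈ LFpsi S μ ψ) ∧
      (∀ x, (fun y => fourierF S μ ψ Jext f y * embC Γ (ψ (x * y))) ∈ LFpsi S μ ψ) ∧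
      fourierF S μ ψ Jext f ∈ SFpsi S μ ψ SchwartzBruhat ∧
      (∀ x, fourierF S μ ψ Jext (fourierF S μ ψ Jext f) x = embC Γ (lam : ℂ) * f (-x)) := by
    intro f hf
    refine Submodule.span_induction ?_ ?_ ?_ ?_ hf
    · -- generators
      rintro h ⟨g, hgSB, a, b, γ, rfl⟩
      have hgint : Integrable g μ := hSB_int g hgSB
      have hghatSB : (fun v => ∫ u, g u * ψbar (u * v) ∂μ) ∈ SchwartzBruhat :=
        hSB_fourier g hgSB
      have hghatint : Integrable (fun v => ∫ u', g u' * ψbar (u' * v) ∂μ) μ :=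
        hSB_int _ hghatSB
      have KA := key_fourier S μ ψ hψadd hψabs hψnt ψbar hψbar_cont hψbar Jext hJext hJinv
        hgint a b γ
      have KA2 := key_fourier S μ ψ hψadd hψabs hψnt ψbar hψbar_cont hψbar Jext hJext hJinv
        hghatint (-b) a (-γ)
      simp only [neg_neg] at KA2
      have hTh : fourierF S μ ψ Jext
            (fun y => embC Γ (ψ (b * y)) * S.lift (fun u => embC Γ (g u)) a γ y)
          = (embC Γ (ψ (b * a)) * Xp γ) • (fun y => embC Γ (ψ (a * y)) *
              S.lift (fun u => embC Γ (∫ u', g u' * ψbar (u' * u) ∂μ)) (-b) (-γ) y) := KA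
      have hint' : ∀ x, (fun y => (fun y => embC Γ (ψ (a * y)) *
            S.lift (fun u => embC Γ (∫ u', g u' * ψbar (u' * u) ∂μ)) (-b) (-γ) y) y *
            embC Γ (ψ (x * y))) ∈ LFpsi S μ ψ :=
        fun x => integrand_mem μ S ψ hψadd hghatint (-b) a (-γ) x
      refine ⟨fun x => integrand_mem μ S ψ hψadd hgint a b γ x, ?_, ?_, ?_⟩
      · intro x
        rw [hTh, integrand_smul (ψ := ψ)]
        exact Submodule.smul_mem _ _ (hint' x)
      · rw [hTh]
        exact Submodule.smul_mem _ _ (Submodule.subset_span ⟨_, hghatSB, -b, a, -γ, rfl⟩)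
      · intro x
        rw [hTh, fourierF_smul S μ ψ Jext _ hint', Pi.smul_apply, congrFun KA2 x]
        have hDD : S.lift (fun u => embC Γ
              (∫ u', (∫ u'', g u'' * ψbar (u'' * u') ∂μ) * ψbar (u' * u) ∂μ)) (-a) γ x
            = embC Γ (lam : ℂ) * S.lift (fun u => embC Γ (g u)) a γ (-x) := by
          rw [show (fun u => embC Γ
                (∫ u', (∫ u'', g u'' * ψbar (u'' * u') ∂μ) * ψbar (u' * u) ∂μ))
              = fun u => embC Γ ((lam : ℂ) * g (-u)) from
            funext fun u => congrArg _ (hSB_inv g hgSB u)]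
          exact lift_flip S _ g a γ x
        rw [hDD]
        have hs : (embC Γ (ψ (b * a)) * Xp γ) * (embC Γ (ψ (a * -b)) * Xp (-γ)) = 1 := by
          have h1 : ψ (b * a) * ψ (a * -b) = 1 := by
            rw [← hψadd, show b * a + a * -b = 0 by ring, hψ0]
          calc (embC Γ (ψ (b * a)) * Xp γ) * (embC Γ (ψ (a * -b)) * Xp (-γ))
              = embC Γ (ψ (b * a) * ψ (a * -b)) * (Xp γ * Xp (-γ)) := by
                rw [map_mul]; ring
            _ = 1 := by
                rw [h1, map_one, ← Xp_add, add_neg_cancel, Xp_zero, one_mul]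
        have hx9 : ψ (-b * x) = ψ (b * -x) := congrArg ψ (by ring)
        show (embC Γ (ψ (b * a)) * Xp γ) • ((embC Γ (ψ (a * -b)) * Xp (-γ)) *
            (embC Γ (ψ (-b * x)) *
              (embC Γ (lam : ℂ) * S.lift (fun u => embC Γ (g u)) a γ (-x))))
          = embC Γ (lam : ℂ) *
            (embC Γ (ψ (b * -x)) * S.lift (fun u => embC Γ (g u)) a γ (-x))
        rw [smul_eq_mul, hx9]
        linear_combination (embC Γ (ψ (b * -x)) * embC Γ (lam : ℂ) *
          S.lift (fun u => embC Γ (g u)) a γ (-x)) * hs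
    · -- zero
      refine ⟨integrand_zero_mem S μ ψ, ?_, ?_, ?_⟩
      · intro x
        rw [fourierF_zero]
        exact integrand_zero_mem S μ ψ x
      · rw [fourierF_zero]
        exact Submodule.zero_mem _
      · intro x
        rw [fourierF_zero, fourierF_zero]
        simp
    · -- add
      rintro u v hu hv ⟨ihu1, ihu2, ihu3, ihu4⟩ ⟨ihv1, ihv2, ihv3, ihv4⟩
      refine ⟨?_, ?_, ?_, ?_⟩
      · intro x
        rw [integrand_add (ψ := ψ)]
        exact Submodule.add_mem _ (ihu1 x) (ihv1 x)
      · intro x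
        rw [fourierF_add S μ ψ Jext ihu1 ihv1, integrand_add (ψ := ψ)]
        exact Submodule.add_mem _ (ihu2 x) (ihv2 x)
      · rw [fourierF_add S μ ψ Jext ihu1 ihv1]
        exact Submodule.add_mem _ ihu3 ihv3
      · intro x
        rw [fourierF_add S μ ψ Jext ihu1 ihv1, fourierF_add S μ ψ Jext ihu2 ihv2,
          Pi.add_apply, ihu4 x, ihv4 x, Pi.add_apply, mul_add]
    · -- smul
      rintro c u hu ⟨ihu1, ihu2, ihu3, ihu4⟩
      refine ⟨?_, ?_, ?_, ?_⟩
      · intro x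
        rw [integrand_smul (ψ := ψ)]
        exact Submodule.smul_mem _ _ (ihu1 x)
      · intro x
        rw [fourierF_smul S μ ψ Jext c ihu1, integrand_smul (ψ := ψ)]
        exact Submodule.smul_mem _ _ (ihu2 x)
      · rw [fourierF_smul S μ ψ Jext c ihu1]
        exact Submodule.smul_mem _ _ ihu3
      · intro x
        rw [fourierF_smul S μ ψ Jext c ihu1, fourierF_smul S μ ψ Jext c ihu2,
          Pi.smul_apply, smul_eq_mul, ihu4 x, Pi.smul_apply, smul_eq_mul]
        ring
  exact ⟨fun f hf => (main f hf).2.2.1, fun f hf x => (main f hf).2.2.2 x⟩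
end
end

section
/- For every Schwartz–Bruhat function g on K and every α ∈ K^×, the *-transform satisfies (x ↦ g(αx))* = |α|^{−2}·(x ↦ g*(α^{−1}x)). -/
noncomputable section

open MeasureTheory
open scoped Classical

section NALF

variable {K : Type*}

/-- The normalized absolute value `|x| = q^{-w(x)}` of a nonarchimedean local field. -/
noncomputable def absv [Field K] (q : ℕ) (w : K → ℤ) (x : K) : ℝ :=
  if x = 0 then 0 else (q : ℝ) ^ (-(w x))

/-- The map `∇ : K → K`, `x ↦ π^{w(x)}·x` (and `∇0 = 0`). -/
noncomputable def nabla [Field K] (w : K → ℤ) (π : K) (x : K) : K :=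
  if x = 0 then 0 else π ^ (w x) * x

/-- The operator `W`: `Wg(x) = g(π^{-w(x)/2}x)` if `w(x)` is even,
`Wg(x) = g(π^{(-w(x)-1)/2}x)` if `w(x)` is odd, and `Wg(0) = g(0)`. -/
noncomputable def Wop [Field K] (w : K → ℤ) (π : K) (g : K → ℂ) : K → ℂ := fun x =>
  if x = 0 then g 0
  else if Even (w x) then g (π ^ (-(w x) / 2) * x)
  else g (π ^ ((-(w x) - 1) / 2) * x)

/-- The Fourier transform `ĝ(y) = ∫ g(x)ψ(xy) dμ(x)` on `K`. -/
noncomputable def fourierK [Field K] [MeasurableSpace K] (μ : Measure K) (ψ : K → ℂ)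
    (g : K → ℂ) : K → ℂ :=
  fun y => ∫ x, g x * ψ (x * y) ∂μ

/-- The `*`-transform `g* = (Wg)^ ∘ ∇`. -/
noncomputable def starT [Field K] [MeasurableSpace K] (μ : Measure K) (ψ : K → ℂ)
    (w : K → ℤ) (π : K) (g : K → ℂ) : K → ℂ :=
  fun y => fourierK μ ψ (Wop w π g) (nabla w π y)

/-- The Schwartz–Bruhat space of a nonarchimedean local field: locally constant,
compactly supported complex-valued functions. -/
def SBset (K : Type*) [TopologicalSpace K] : Set (K → ℂ) :=
  {g | IsLocallyConstant g ∧ HasCompactSupport g}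

/-- `K` is a nonarchimedean local field with normalized valuation `w`, prime `π`, residue
cardinality `q`, and Haar measure `μ`: the topology is the valuation topology, the ring of
integers is compact, and scaling by `c` multiplies the Haar measure by `q^{-w(c)}` (the
normalized module). -/
structure IsNALocalField [Field K] [TopologicalSpace K] [MeasurableSpace K]
    (μ : Measure K) (w : K → ℤ) (π : K) (q : ℕ) : Prop where
  one_lt_q : 1 < q
  pi_ne : π ≠ 0
  w_pi : w π = 1
  w_mul : ∀ x y : K, x ≠ 0 → y ≠ 0 → w (x * y) = w x + w y
  w_add : ∀ x y : K, x ≠ 0 → y ≠ 0 → x + y ≠ 0 → min (w x) (w y) ≤ w (x + y)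
  nhds_basis : (nhds (0 : K)).HasBasis (fun _ : ℤ => True)
    (fun n => {x : K | x = 0 ∨ n ≤ w x})
  compact_integers : IsCompact {x : K | x = 0 ∨ 0 ≤ w x}
  scaling : ∀ g : K → ℂ, Integrable g μ → ∀ c : K, c ≠ 0 →
    Integrable (fun x => g (c * x)) μ ∧
    (∫ x, g (c * x) ∂μ) = ((q : ℝ) ^ (w c)) • ∫ x, g x ∂μ

/-- `ψ` is a nontrivial continuous additive character of `K` (valued in the unit circle). -/
def IsAddCharacter [Field K] [TopologicalSpace K] (ψ : K → ℂ) : Prop :=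
  (∀ x y : K, ψ (x + y) = ψ x * ψ y) ∧ (∀ x : K, ‖ψ x‖ = 1) ∧
  Continuous ψ ∧ (∃ x : K, ψ x ≠ 1)

/-- `ψ` has conductor `d`: `ψ` is trivial on `π^d O_K` but nontrivial on `π^{d-1} O_K`. -/
def HasConductor [Field K] (w : K → ℤ) (ψ : K → ℂ) (d : ℤ) : Prop :=
  (∀ x : K, (x = 0 ∨ d ≤ w x) → ψ x = 1) ∧ (∃ x : K, x ≠ 0 ∧ d - 1 ≤ w x ∧ ψ x ≠ 1)

end NALF


section Aux

open MeasureTheory Filter Set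

variable {K : Type*} [Field K] [TopologicalSpace K] [IsTopologicalRing K]
  [MeasurableSpace K]
variable {μ : MeasureTheory.Measure K} {w : K → ℤ} {π : K} {q : ℕ}

namespace IsNALocalField

lemma w_one (h : IsNALocalField μ w π q) : w 1 = 0 := by
  have := h.w_mul 1 1 one_ne_zero one_ne_zero
  simp at this; omega

lemma w_neg (h : IsNALocalField μ w π q) {x : K} (hx : x ≠ 0) : w (-x) = w x := by
  have h1 : w ((-1 : K) * (-1)) = w (-1) + w (-1) :=
    h.w_mul (-1) (-1) (by norm_num) (by norm_num)
  simp only [neg_mul, one_mul, neg_neg] at h1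
  have h2 := h.w_one
  have h3 : w ((-1 : K) * x) = w (-1) + w x :=
    h.w_mul (-1) x (by norm_num) hx
  rw [neg_one_mul] at h3
  omega

lemma w_zpow (h : IsNALocalField μ w π q) : ∀ k : ℤ, w (π ^ k) = k := by
  have hπ := h.pi_ne
  have hnat : ∀ n : ℕ, w (π ^ n) = n := by
    intro n
    induction n with
    | zero => simpa using h.w_one
    | succ n ih =>
      have : w (π ^ n * π) = w (π ^ n) + w π := h.w_mul _ _ (pow_ne_zero _ hπ) hπ
      rw [← pow_succ] at this
      rw [this, ih, h.w_pi]; push_cast; omega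
  intro k
  rcases k with n | n
  · simpa using hnat n
  · rw [Int.negSucc_eq]
    have h1 : w (π ^ (-((n : ℤ) + 1)) * π ^ ((n : ℤ) + 1)) =
        w (π ^ (-((n : ℤ) + 1))) + w (π ^ ((n : ℤ) + 1)) :=
      h.w_mul _ _ (zpow_ne_zero _ hπ) (zpow_ne_zero _ hπ)
    rw [← zpow_add₀ hπ, neg_add_cancel, zpow_zero, h.w_one] at h1
    have h3 : w (π ^ ((n : ℤ) + 1)) = (n : ℤ) + 1 := by
      rw [show ((n : ℤ) + 1) = ((n + 1 : ℕ) : ℤ) by omega, zpow_natCast,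
        hnat (n + 1)]
    omega

/-- The ball `{x | x = 0 ∨ n ≤ w x}` as an additive subgroup. -/
def ball (h : IsNALocalField μ w π q) (n : ℤ) : AddSubgroup K where
  carrier := {x : K | x = 0 ∨ n ≤ w x}
  zero_mem' := Or.inl rfl
  add_mem' := by
    intro a b ha hb
    by_cases ha0 : a = 0
    · subst ha0; simpa using hb
    by_cases hb0 : b = 0
    · subst hb0; simpa using ha
    by_cases hab : a + b = 0
    · exact Or.inl hab
    have hwa : n ≤ w a := ha.resolve_left ha0
    have hwb : n ≤ w b := hb.resolve_left hb0
    have := h.w_add a b ha0 hb0 hab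
    right
    rcases min_le_iff.mp (le_refl (min (w a) (w b))) with h' | h' <;> omega
  neg_mem' := by
    intro a ha
    by_cases ha0 : a = 0
    · subst ha0; simp
    · exact Or.inr (by rw [h.w_neg ha0]; exact ha.resolve_left ha0)

lemma ball_mem_nhds (h : IsNALocalField μ w π q) (n : ℤ) :
    {x : K | x = 0 ∨ n ≤ w x} ∈ nhds (0 : K) :=
  h.nhds_basis.mem_of_mem trivial

lemma isOpen_ball (h : IsNALocalField μ w π q) (n : ℤ) :
    IsOpen {x : K | x = 0 ∨ n ≤ w x} :=
  AddSubgroup.isOpen_of_mem_nhds (h.ball n) (h.ball_mem_nhds n)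

lemma isClosed_ball (h : IsNALocalField μ w π q) (n : ℤ) :
    IsClosed {x : K | x = 0 ∨ n ≤ w x} :=
  AddSubgroup.isClosed_of_isOpen (h.ball n) (h.isOpen_ball n)

lemma ball_eq_image (h : IsNALocalField μ w π q) (n : ℤ) :
    {x : K | x = 0 ∨ n ≤ w x} = (fun x => π ^ n * x) '' {x : K | x = 0 ∨ 0 ≤ w x} := by
  have hπ := h.pi_ne
  ext x
  constructor
  · rintro (rfl | hx)
    · exact ⟨0, Or.inl rfl, by simp⟩
    by_cases hx0 : x = 0
    · exact ⟨0, Or.inl rfl, by simp [hx0]⟩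
    refine ⟨π ^ (-n) * x, Or.inr ?_, ?_⟩
    · rw [h.w_mul _ _ (zpow_ne_zero _ hπ) hx0, h.w_zpow]; omega
    · show π ^ n * (π ^ (-n) * x) = x
      rw [← mul_assoc, ← zpow_add₀ hπ]; simp
  · rintro ⟨y, (rfl | hy), rfl⟩
    · simp
    by_cases hy0 : y = 0
    · subst hy0; simp
    right
    rw [h.w_mul _ _ (zpow_ne_zero _ hπ) hy0, h.w_zpow]; omega

lemma isCompact_ball (h : IsNALocalField μ w π q) (n : ℤ) :
    IsCompact {x : K | x = 0 ∨ n ≤ w x} := by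
  rw [h.ball_eq_image n]
  exact h.compact_integers.image (continuous_const.mul continuous_id)

lemma isOpen_sphere (h : IsNALocalField μ w π q) (n : ℤ) :
    IsOpen {x : K | x ≠ 0 ∧ w x = n} := by
  have : {x : K | x ≠ 0 ∧ w x = n}
      = {x : K | x = 0 ∨ n ≤ w x} ∩ {x : K | x = 0 ∨ n + 1 ≤ w x}ᶜ := by
    ext x
    simp only [mem_setOf_eq, mem_inter_iff, mem_compl_iff]
    constructor
    · rintro ⟨hx0, rfl⟩
      exact ⟨Or.inr le_rfl, by push_neg; exact ⟨hx0, by omega⟩⟩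
    · rintro ⟨h1, h2⟩
      push_neg at h2
      obtain ⟨hx0, h2⟩ := h2
      refine ⟨hx0, ?_⟩
      rcases h1 with rfl | h1
      · exact absurd rfl hx0
      · omega
  rw [this]
  exact (h.isOpen_ball n).inter (h.isClosed_ball (n + 1)).isOpen_compl

lemma continuous_Wop (h : IsNALocalField μ w π q) {g : K → ℂ}
    (hg : IsLocallyConstant g) : Continuous (Wop w π g) := by
  rw [continuous_iff_continuousAt]
  intro x
  by_cases hx : x = 0
  · subst hx
    -- g is constant near 0
    have hU : {y : K | g y = g 0} ∈ nhds (0 : K) :=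
      (hg.isOpen_fiber (g 0)).mem_nhds rfl
    obtain ⟨M, -, hM⟩ := h.nhds_basis.mem_iff.mp hU
    set T : ℤ := 2 * M + 2 with hT
    have hconst : ∀ y ∈ {x : K | x = 0 ∨ T ≤ w x}, Wop w π g y = g 0 := by
      intro y hy
      rcases hy with rfl | hy
      · simp [Wop]
      by_cases hy0 : y = 0
      · simp [Wop, hy0]
      have hwy : T ≤ w y := hy
      have hval : ∀ e : ℤ, M ≤ e + w y → g (π ^ e * y) = g 0 := by
        intro e he
        apply hM
        refine Or.inr ?_
        rw [h.w_mul _ _ (zpow_ne_zero _ h.pi_ne) hy0, h.w_zpow]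
        exact he
      simp only [Wop]
      rw [if_neg hy0]
      split
      · apply hval; omega
      · apply hval; omega
    have hev : Wop w π g =ᶠ[nhds (0 : K)] fun _ => g 0 :=
      eventually_of_mem (h.ball_mem_nhds T) hconst
    have : Wop w π g 0 = g 0 := by simp [Wop]
    exact (continuousAt_const (y := g 0)).congr (hev.symm)
  · set n := w x with hn
    have hU : {y : K | y ≠ 0 ∧ w y = n} ∈ nhds x :=
      (h.isOpen_sphere n).mem_nhds ⟨hx, rfl⟩
    set e : ℤ := if Even n then -n / 2 else (-n - 1) / 2 with he
    have hf : Continuous fun y : K => g (π ^ e * y) :=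
      hg.continuous.comp (continuous_const.mul continuous_id)
    have hev : (fun y : K => g (π ^ e * y)) =ᶠ[nhds x] Wop w π g := by
      apply eventually_of_mem hU
      rintro y ⟨hy0, hyn⟩
      simp only [Wop, if_neg hy0, hyn, he]
      split <;> simp_all
    exact hf.continuousAt.congr hev

lemma support_subset_ball (h : IsNALocalField μ w π q) {g : K → ℂ}
    (hg : HasCompactSupport g) :
    ∃ N : ℤ, Function.support g ⊆ {x : K | x = 0 ∨ N ≤ w x} := by
  have hcover : tsupport g ⊆ ⋃ n : ℤ, {x : K | x = 0 ∨ n ≤ w x} := by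
    intro x _
    by_cases hx : x = 0
    · exact Set.mem_iUnion.mpr ⟨0, Or.inl hx⟩
    · exact Set.mem_iUnion.mpr ⟨w x, Or.inr le_rfl⟩
  obtain ⟨t, ht⟩ := hg.elim_finite_subcover _ (fun n => h.isOpen_ball n) hcover
  by_cases hte : t.Nonempty
  · refine ⟨t.min' hte, ?_⟩
    intro x hx
    have hmem := ht (subset_tsupport g hx)
    simp only [Set.mem_iUnion] at hmem
    obtain ⟨n, hn, hxn⟩ := hmem
    rcases hxn with rfl | hxn
    · exact Or.inl rfl
    · exact Or.inr (le_trans (t.min'_le n hn) hxn)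
  · refine ⟨0, fun x hx => ?_⟩
    exfalso
    rw [Finset.not_nonempty_iff_eq_empty.mp hte] at ht
    simpa using ht (subset_tsupport g hx)

lemma hasCompactSupport_Wop (h : IsNALocalField μ w π q) {g : K → ℂ}
    (hg : HasCompactSupport g) : HasCompactSupport (Wop w π g) := by
  obtain ⟨N, hN⟩ := h.support_subset_ball hg
  have hsub : Function.support (Wop w π g) ⊆ {x : K | x = 0 ∨ 2 * N ≤ w x} := by
    intro x hx
    by_cases hx0 : x = 0
    · exact Or.inl hx0
    right
    simp only [Function.mem_support, Wop, if_neg hx0] at hx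
    have key : ∀ e : ℤ, g (π ^ e * x) ≠ 0 → N ≤ e + w x := by
      intro e hge
      have := hN hge
      rcases this with h0 | hle
      · exact absurd h0 (mul_ne_zero (zpow_ne_zero _ h.pi_ne) hx0)
      · rwa [h.w_mul _ _ (zpow_ne_zero _ h.pi_ne) hx0, h.w_zpow] at hle
    rcases Int.even_or_odd (w x) with hev | hod
    · rw [if_pos hev] at hx
      have := key _ hx
      obtain ⟨k, hk⟩ := hev
      omega
    · rw [if_neg (Int.not_even_iff_odd.mpr hod)] at hx
      have := key _ hx
      obtain ⟨k, hk⟩ := hod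
      omega
  apply IsCompact.of_isClosed_subset (h.isCompact_ball (2 * N)) (isClosed_tsupport _)
  exact closure_minimal hsub (h.isClosed_ball (2 * N))

/-- `W(g(α·)) = (Wg)(π^{w α}α · ·)`. -/
lemma Wop_scale (h : IsNALocalField μ w π q) (g : K → ℂ) {α : K} (hα : α ≠ 0) :
    Wop w π (fun x => g (α * x)) = fun x => Wop w π g (π ^ (w α) * α * x) := by
  have hπ := h.pi_ne
  set m := w α with hm
  set c : K := π ^ m * α with hc
  have hc0 : c ≠ 0 := mul_ne_zero (zpow_ne_zero _ hπ) hα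
  have hwc : ∀ x : K, x ≠ 0 → w (c * x) = 2 * m + w x := by
    intro x hx
    rw [h.w_mul _ _ hc0 hx, h.w_mul _ _ (zpow_ne_zero _ hπ) hα, h.w_zpow]
    omega
  funext x
  by_cases hx : x = 0
  · subst hx
    simp [Wop]
  have hcx : c * x ≠ 0 := mul_ne_zero hc0 hx
  have hw : w (c * x) = 2 * m + w x := hwc x hx
  have harg : ∀ e : ℤ, π ^ (e - m) * (c * x) = α * (π ^ e * x) := by
    intro e
    rw [hc, show π ^ (e - m) * (π ^ m * α * x) = π ^ (e - m) * π ^ m * (α * x) by ring,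
      ← zpow_add₀ hπ, show e - m + m = e by ring]
    ring
  simp only [Wop, if_neg hx, if_neg hcx, hw]
  have hpar : Even (2 * m + w x) ↔ Even (w x) := by
    constructor
    · rintro ⟨k, hk⟩; exact ⟨k - m, by omega⟩
    · rintro ⟨k, hk⟩; exact ⟨k + m, by omega⟩
  by_cases hev : Even (w x)
  · rw [if_pos hev, if_pos (hpar.mpr hev)]
    obtain ⟨k, hk⟩ := hev
    rw [show -(2 * m + w x) / 2 = -(w x) / 2 - m by omega, harg]
  · rw [if_neg hev, if_neg (fun hh => hev (hpar.mp hh))]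
    rcases Int.even_or_odd (w x) with h' | h'
    · exact absurd h' hev
    obtain ⟨k, hk⟩ := h'
    rw [show (-(2 * m + w x) - 1) / 2 = (-(w x) - 1) / 2 - m by omega, harg]

lemma nabla_scale (h : IsNALocalField μ w π q) {α : K} (hα : α ≠ 0) (y : K) :
    nabla w π (α⁻¹ * y) = (π ^ (w α) * α)⁻¹ * nabla w π y := by
  have hπ := h.pi_ne
  by_cases hy : y = 0
  · simp [hy, nabla]
  have hαy : α⁻¹ * y ≠ 0 := mul_ne_zero (inv_ne_zero hα) hy
  have hwinv : w α⁻¹ = -(w α) := by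
    have := h.w_mul α α⁻¹ hα (inv_ne_zero hα)
    rw [mul_inv_cancel₀ hα, h.w_one] at this
    omega
  have hw : w (α⁻¹ * y) = w y - w α := by
    rw [h.w_mul _ _ (inv_ne_zero hα) hy, hwinv]; omega
  simp only [nabla, if_neg hy, if_neg hαy, hw]
  rw [mul_inv, ← zpow_neg, zpow_sub₀ hπ, zpow_neg]
  field_simp

end IsNALocalField

end Aux

/-- For every Schwartz–Bruhat function `g` on `K` and every `α ∈ K^×`,
the `*`-transform satisfies `(x ↦ g(αx))* = |α|^{-2}·(x ↦ g*(α⁻¹x))`. -/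
theorem statement11
    {K : Type*} [Field K] [TopologicalSpace K] [IsTopologicalRing K]
    [LocallyCompactSpace K] [MeasurableSpace K] [BorelSpace K]
    (μ : Measure K) [μ.IsAddHaarMeasure]
    (w : K → ℤ) (π : K) (q : ℕ) (h : IsNALocalField μ w π q)
    (ψ : K → ℂ) (hψ : IsAddCharacter ψ)
    (g : K → ℂ) (hg : g ∈ SBset K) (α : K) (hα : α ≠ 0) :
    starT μ ψ w π (fun x => g (α * x))
      = fun y => (((absv q w α ^ (-2 : ℤ)) : ℝ) : ℂ) * starT μ ψ w π g (α⁻¹ * y) := by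
  obtain ⟨hg_lc, hg_cs⟩ := hg
  obtain ⟨ψ_add, ψ_abs, ψ_cont, -⟩ := hψ
  have hπ := h.pi_ne
  set m : ℤ := w α with hm
  set c : K := π ^ m * α with hc
  have hc0 : c ≠ 0 := mul_ne_zero (zpow_ne_zero _ hπ) hα
  have hwc : w c = 2 * m := by
    rw [hc, h.w_mul _ _ (zpow_ne_zero _ hπ) hα, h.w_zpow]; omega
  have hq0 : (0 : ℝ) < (q : ℝ) := by
    have := h.one_lt_q; positivity
  -- integrability of the integrand
  have hWcont : Continuous (Wop w π g) := h.continuous_Wop hg_lc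
  have hWsupp : HasCompactSupport (Wop w π g) := h.hasCompactSupport_Wop hg_cs
  have hint : ∀ z : K, Integrable (fun u => Wop w π g u * ψ (u * z)) μ := by
    intro z
    apply Continuous.integrable_of_hasCompactSupport
    · exact hWcont.mul (ψ_cont.comp (continuous_id.mul continuous_const))
    · exact hWsupp.mul_right
  funext y
  -- rewrite the left-hand side using Wop_scale
  show fourierK μ ψ (Wop w π fun x => g (α * x)) (nabla w π y) = _
  rw [h.Wop_scale g hα, ← hm, ← hc]
  -- apply the scaling property of the Haar measure
  have hscale := h.scaling (fun u => Wop w π g u * ψ (u * (c⁻¹ * nabla w π y)))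
    (hint _) c hc0
  have heq : (fun x => Wop w π g (c * x) * ψ (c * x * (c⁻¹ * nabla w π y)))
      = fun x => Wop w π g (c * x) * ψ (x * nabla w π y) := by
    funext x
    congr 1
    rw [show c * x * (c⁻¹ * nabla w π y) = c * c⁻¹ * (x * nabla w π y) by ring,
      mul_inv_cancel₀ hc0, one_mul]
  rw [heq] at hscale
  have hLHS : fourierK μ ψ (fun x => Wop w π g (c * x)) (nabla w π y)
      = ∫ x, Wop w π g (c * x) * ψ (x * nabla w π y) ∂μ := rfl
  rw [hLHS, hscale.2, hwc]
  -- identify the right-hand side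
  have hnab : nabla w π (α⁻¹ * y) = c⁻¹ * nabla w π y := h.nabla_scale hα y
  show ((q : ℝ) ^ (2 * m)) • (∫ x, Wop w π g x * ψ (x * (c⁻¹ * nabla w π y)) ∂μ)
      = ((absv q w α ^ (-2 : ℤ) : ℝ) : ℂ) * fourierK μ ψ (Wop w π g) (nabla w π (α⁻¹ * y))
  rw [hnab]
  have hcoef : (absv q w α ^ (-2 : ℤ) : ℝ) = (q : ℝ) ^ (2 * m) := by
    rw [absv, if_neg hα, ← zpow_mul, ← hm]
    ring_nf
  rw [hcoef]
  rw [Complex.real_smul]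
  norm_cast
end
end
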